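/- Let s = 3, r(θ) = 2 sin(θ/2), and h(r) = r²/2 − 1 + 1/(4r) − 2/r³. For any angles 0 < θ₂ < θ₁ < π/2 set h₁₂ = h(r(θ₁−θ₂)), h₁₄ = h(r(θ₁+θ₂)), h₁₃ = h(r(θ₁)), h₂₃ = h(r(θ₂)). Then for all positive masses m₁, m₂, m₃ > 0 the 2×2 symmetric matrix 𝓗₁ with diagonal entries 2(h₁₂+h₁₄)m₁m₂ + 2h₁₃m₁m₃ and 2(h₁₂+h₁₄)m₁m₂ + 2h₂₃m₂m₃, and off-diagonal entries −2m₁m₂(h₁₂+h₁₄), has positive determinant, equal to 4m₁m₂m₃·((h₁₂+h₁₄)(h₁₃m₁ + h₂₃m₂) + h₁₃h₂₃m₃), and negative trace; hence 𝓗₁ is negative definite. -/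

import Mathlib

open Real Matrix

set_option maxHeartbeats 1000000


lemma aux_neg (x : ℝ) (hx : 0 < x) (hx2 : x^2 ≤ 2) :
    x ^ 2 / 2 - 1 + 1 / (4 * x) - 2 / x ^ 3 < 0 := by
  have hx3 : (0:ℝ) < x^3 := by positivity
  have e : x ^ 2 / 2 - 1 + 1 / (4 * x) - 2 / x ^ 3
      = (2*x^5 - 4*x^3 + x^2 - 8) / (4*x^3) := by
    field_simp; ring
  rw [e]
  apply div_neg_of_neg_of_pos _ (by positivity)
  nlinarith [mul_nonneg hx3.le (sub_nonneg.2 hx2)]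

lemma aux_mono (x y : ℝ) (hx : 0 < x) (hxy : x < y) (hy2 : y ≤ 2) :
    x ^ 2 / 2 - 1 + 1 / (4 * x) - 2 / x ^ 3 < y ^ 2 / 2 - 1 + 1 / (4 * y) - 2 / y ^ 3 := by
  have hy : 0 < y := hx.trans hxy
  rw [← sub_pos]
  have e : y ^ 2 / 2 - 1 + 1 / (4 * y) - 2 / y ^ 3 - (x ^ 2 / 2 - 1 + 1 / (4 * x) - 2 / x ^ 3)
      = (2*x^3*y^3*(y^2-x^2) + x^2*y^2*(x-y) + 8*(y^3-x^3)) / (4*x^3*y^3) := by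
    field_simp; ring
  rw [e]
  apply div_pos _ (by positivity)
  have hxy4 : x*y < 4 := by nlinarith
  have hkey : 0 < 8*(x^2+x*y+y^2) - x^2*y^2 := by
    nlinarith [mul_pos hx hy, mul_pos (mul_pos hx hy) (sub_pos.2 hxy4)]
  nlinarith [mul_pos (sub_pos.2 hxy) hkey,
    mul_pos (mul_pos (mul_pos (pow_pos hx 3) (pow_pos hy 3)) (sub_pos.2 hxy)) (add_pos hx hy)]

lemma aux_sum (s c : ℝ) (hs : 0 < s) (hc : 0 < c) (h : s^2 + c^2 = 1) :
    ((2*s) ^ 2 / 2 - 1 + 1 / (4 * (2*s)) - 2 / (2*s) ^ 3)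
      + ((2*c) ^ 2 / 2 - 1 + 1 / (4 * (2*c)) - 2 / (2*c) ^ 3) < 0 := by
  have hs1 : s^2 < 2 := by nlinarith
  have hc1 : c^2 < 2 := by nlinarith
  have t : ∀ z : ℝ, 0 < z → z^2 < 2 → 1/(8*z) - 1/(4*z^3) < 0 := by
    intro z hz hz2
    have e : 1/(8*z) - 1/(4*z^3) = (z^2 - 2)/(8*z^3) := by field_simp; ring
    rw [e]; exact div_neg_of_neg_of_pos (by linarith) (by positivity)
  have es : (2*s) ^ 2 / 2 - 1 + 1 / (4 * (2*s)) - 2 / (2*s) ^ 3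
      = 2*s^2 - 1 + (1/(8*s) - 1/(4*s^3)) := by field_simp; ring
  have ec : (2*c) ^ 2 / 2 - 1 + 1 / (4 * (2*c)) - 2 / (2*c) ^ 3
      = 2*c^2 - 1 + (1/(8*c) - 1/(4*c^3)) := by field_simp; ring
  rw [es, ec]
  have := t s hs hs1
  have := t c hc hc1
  nlinarith



lemma block_aux (x y p q m₁ m₂ m₃ : ℝ) (hS : x + y < 0) (hp : p < 0) (hq : q < 0)
    (hm₁ : 0 < m₁) (hm₂ : 0 < m₂) (hm₃ : 0 < m₃)
    (H1 : Matrix (Fin 2) (Fin 2) ℝ)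
    (hH1 : H1 = !![2 * (x + y) * m₁ * m₂ + 2 * p * m₁ * m₃,
                   -(2 * m₁ * m₂ * (x + y));
                   -(2 * m₁ * m₂ * (x + y)),
                   2 * (x + y) * m₁ * m₂ + 2 * q * m₂ * m₃]) :
    H1.det = 4 * m₁ * m₂ * m₃ * ((x + y) * (p * m₁ + q * m₂) + p * q * m₃) ∧
      0 < H1.det ∧ H1.trace < 0 ∧ (-H1).PosDef := by
  have hdet : H1.det = 4 * m₁ * m₂ * m₃ * ((x + y) * (p * m₁ + q * m₂) + p * q * m₃) := by
    rw [hH1, Matrix.det_fin_two_of]; ring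
  have hterm : 0 < (x + y) * (p * m₁ + q * m₂) + p * q * m₃ := by
    have t1 : 0 < (x + y) * (p * m₁ + q * m₂) :=
      mul_pos_of_neg_of_neg hS (by nlinarith [mul_neg_of_neg_of_pos hp hm₁, mul_neg_of_neg_of_pos hq hm₂])
    have t2 : 0 < p * q * m₃ := mul_pos (mul_pos_of_neg_of_neg hp hq) hm₃
    linarith
  have hdetpos : 0 < H1.det := by
    rw [hdet]
    have : 0 < 4 * m₁ * m₂ * m₃ := by positivity
    exact mul_pos this hterm
  have htr : H1.trace < 0 := by
    rw [hH1, Matrix.trace_fin_two_of]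
    nlinarith [mul_pos (mul_pos hm₁ hm₂) hm₃, mul_pos hm₁ hm₂,
      mul_neg_of_neg_of_pos hS (mul_pos hm₁ hm₂),
      mul_neg_of_neg_of_pos hp (mul_pos hm₁ hm₃),
      mul_neg_of_neg_of_pos hq (mul_pos hm₂ hm₃)]
  refine ⟨hdet, hdetpos, htr, ?_, ?_⟩
  · show (-H1)ᴴ = -H1
    rw [hH1]
    ext i j
    fin_cases i <;> fin_cases j <;>
      simp [Matrix.conjTranspose_apply]
  · intro v hv
    have hv01 : v 0 ≠ 0 ∨ v 1 ≠ 0 := by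
      by_contra hcon
      push_neg at hcon
      exact hv (by ext i; fin_cases i <;> simp [hcon.1, hcon.2])
    set A : ℝ := -(2 * (x + y) * m₁ * m₂ + 2 * p * m₁ * m₃) with hA
    set B : ℝ := 2 * m₁ * m₂ * (x + y) with hB
    set C : ℝ := -(2 * (x + y) * m₁ * m₂ + 2 * q * m₂ * m₃) with hC
    have hApos : 0 < A := by
      rw [hA]
      nlinarith [mul_neg_of_neg_of_pos hS (mul_pos hm₁ hm₂),
        mul_neg_of_neg_of_pos hp (mul_pos hm₁ hm₃)]
    have hCpos : 0 < C := by
      rw [hC]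
      nlinarith [mul_neg_of_neg_of_pos hS (mul_pos hm₁ hm₂),
        mul_neg_of_neg_of_pos hq (mul_pos hm₂ hm₃)]
    have hACB : 0 < A * C - B * B := by
      have : A * C - B * B = H1.det := by
        rw [hH1, Matrix.det_fin_two_of, hA, hB, hC]; ring
      rw [this]; exact hdetpos
    have hgoal : 0 < dotProduct (star v) ((-H1) *ᵥ v) := by
      have hmv : dotProduct (star v) ((-H1) *ᵥ v)
          = A * v 0 ^ 2 + 2 * B * (v 0 * v 1) + C * v 1 ^ 2 := by
        rw [hH1]
        simp [Matrix.mulVec, dotProduct, Fin.sum_univ_two, hA, hB, hC]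
        ring
      rw [hmv]
      rcases hv01 with h0 | h1
      · rcases eq_or_ne (v 1) 0 with h1 | h1
        · have : 0 < v 0 ^ 2 := by positivity
          rw [h1]; ring_nf; nlinarith
        · have hv1 : 0 < v 1 ^ 2 := by positivity
          nlinarith [sq_nonneg (A * v 0 + B * v 1), mul_pos hACB hv1, hApos]
      · have hv1 : 0 < v 1 ^ 2 := by positivity
        nlinarith [sq_nonneg (A * v 0 + B * v 1), mul_pos hACB hv1, hApos]
    refine lt_of_lt_of_eq hgoal ?_
    simp [Finsupp.sum_fintype, dotProduct, mulVec, Fin.sum_univ_two]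
    ring


/-- Let `s = 3`, `r(θ) = 2 sin(θ/2)`, and `h(r) = r²/2 − 1 + 1/(4r) − 2/r³`.
For `0 < θ₂ < θ₁ < π/2`, setting `h₁₂ = h(r(θ₁−θ₂))`, `h₁₄ = h(r(θ₁+θ₂))`,
`h₁₃ = h(r(θ₁))`, `h₂₃ = h(r(θ₂))`, for all positive masses `m₁, m₂, m₃ > 0`
the `2×2` symmetric block `𝓗₁` of the congruence-transformed Hessian has
determinant `4m₁m₂m₃·((h₁₂+h₁₄)(h₁₃m₁ + h₂₃m₂) + h₁₃h₂₃m₃) > 0` and negative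
trace; hence `𝓗₁` is negative definite. -/
theorem hessian_block_one_negative_definite
    (θ₁ θ₂ m₁ m₂ m₃ : ℝ) (h₂ : 0 < θ₂) (h₂₁ : θ₂ < θ₁) (h₁ : θ₁ < π / 2)
    (hm₁ : 0 < m₁) (hm₂ : 0 < m₂) (hm₃ : 0 < m₃)
    (r hh : ℝ → ℝ) (hr : r = fun θ => 2 * Real.sin (θ / 2))
    (hhh : hh = fun x => x ^ 2 / 2 - 1 + 1 / (4 * x) - 2 / x ^ 3)
    (h₁₂ h₁₄ h₁₃ h₂₃ : ℝ)
    (e₁₂ : h₁₂ = hh (r (θ₁ - θ₂))) (e₁₄ : h₁₄ = hh (r (θ₁ + θ₂)))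
    (e₁₃ : h₁₃ = hh (r θ₁)) (e₂₃ : h₂₃ = hh (r θ₂))
    (H1 : Matrix (Fin 2) (Fin 2) ℝ)
    (hH1 : H1 = !![2 * (h₁₂ + h₁₄) * m₁ * m₂ + 2 * h₁₃ * m₁ * m₃,
                   -(2 * m₁ * m₂ * (h₁₂ + h₁₄));
                   -(2 * m₁ * m₂ * (h₁₂ + h₁₄)),
                   2 * (h₁₂ + h₁₄) * m₁ * m₂ + 2 * h₂₃ * m₂ * m₃]) :
    H1.det = 4 * m₁ * m₂ * m₃ *
        ((h₁₂ + h₁₄) * (h₁₃ * m₁ + h₂₃ * m₂) + h₁₃ * h₂₃ * m₃) ∧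
      0 < H1.det ∧ H1.trace < 0 ∧ (-H1).PosDef := by
  subst hr hhh e₁₂ e₁₄ e₁₃ e₂₃
  have hπ : (0:ℝ) < π := Real.pi_pos
  -- h(r θ) < 0 for 0 < θ ≤ π/2
  have hneg : ∀ θ : ℝ, 0 < θ → θ ≤ π / 2 →
      (fun x : ℝ => x ^ 2 / 2 - 1 + 1 / (4 * x) - 2 / x ^ 3)
        ((fun θ : ℝ => 2 * Real.sin (θ / 2)) θ) < 0 := by
    intro θ hθ hθ2
    simp only
    have hs : 0 < Real.sin (θ / 2) :=
      Real.sin_pos_of_pos_of_lt_pi (by linarith) (by linarith)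
    have hle : Real.sin (θ / 2) ≤ Real.sin (π / 4) := by
      apply Real.strictMonoOn_sin.monotoneOn
      · constructor <;> [linarith; linarith]
      · constructor <;> [linarith; linarith]
      · linarith
    rw [Real.sin_pi_div_four] at hle
    apply aux_neg _ (by linarith)
    nlinarith [Real.sq_sqrt (by norm_num : (2:ℝ) ≥ 0), Real.sqrt_nonneg 2]
  have h13 := hneg θ₁ (by linarith) (by linarith)
  have h23 := hneg θ₂ h₂ (by linarith)
  have h12 := hneg (θ₁ - θ₂) (by linarith) (by linarith)
  -- sum bound
  set a := θ₁ - θ₂ with ha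
  have hS : (fun x : ℝ => x ^ 2 / 2 - 1 + 1 / (4 * x) - 2 / x ^ 3)
        ((fun θ : ℝ => 2 * Real.sin (θ / 2)) a)
      + (fun x : ℝ => x ^ 2 / 2 - 1 + 1 / (4 * x) - 2 / x ^ 3)
        ((fun θ : ℝ => 2 * Real.sin (θ / 2)) (θ₁ + θ₂)) < 0 := by
    simp only
    have hs : 0 < Real.sin (a / 2) :=
      Real.sin_pos_of_pos_of_lt_pi (by simp [ha]; linarith) (by simp [ha]; nlinarith)
    have hc : 0 < Real.cos (a / 2) :=
      Real.cos_pos_of_mem_Ioo ⟨by simp [ha]; nlinarith, by simp [ha]; linarith⟩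
    have hsum : Real.sin (a/2) ^ 2 + Real.cos (a/2) ^ 2 = 1 := Real.sin_sq_add_cos_sq _
    have hs2 : 0 < Real.sin ((θ₁ + θ₂) / 2) :=
      Real.sin_pos_of_pos_of_lt_pi (by linarith) (by linarith)
    have hlt : Real.sin ((θ₁ + θ₂) / 2) < Real.cos (a / 2) := by
      rw [← Real.sin_pi_div_two_sub]
      apply Real.strictMonoOn_sin
      · constructor <;> [linarith; linarith]
      · constructor <;> (simp [ha]; linarith)
      · simp [ha]; linarith
    have hc1 : Real.cos (a / 2) ≤ 1 := Real.cos_le_one _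
    have step := aux_mono (2 * Real.sin ((θ₁ + θ₂) / 2)) (2 * Real.cos (a / 2))
      (by linarith) (by linarith) (by linarith)
    have := aux_sum (Real.sin (a/2)) (Real.cos (a/2)) hs hc hsum
    linarith
  exact block_aux _ _ _ _ _ _ _ hS h13 h23 hm₁ hm₂ hm₃ H1 hH1
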